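/- The repetition system satisfies condition (A2^s) at every level s: for every scalar sequence c with M_s^c ≠ ∅ and every ε > 0 there exist k ∈ ℕ and f ∈ M_s^{c^{(k)}} with ‖f‖_s < ε, where c^{(k)} is the sequence obtained from c by replacing its first k coordinates by 0. -/

import Mathlib

noncomputable section

open Set

/-- The space `X_s = {f : ∑ i, a_{i,s}² ⟪f,e_i⟩² < ∞}` (as a subset of `X₀`). -/
def Xs {X₀ : Type*} [NormedAddCommGroup X₀] [InnerProductSpace ℝ X₀]
    (e : ℕ → X₀) (a : ℕ → ℕ → ℝ) (s : ℕ) : Set X₀ :=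
  {f | Summable fun i => (a i s * (inner ℝ f (e i) : ℝ)) ^ 2}

/-- The inner product `⟪f,h⟫_s = ∑ i, a_{i,s}² ⟪f,e_i⟩₀ ⟪h,e_i⟩₀`. -/
def innerS {X₀ : Type*} [NormedAddCommGroup X₀] [InnerProductSpace ℝ X₀]
    (e : ℕ → X₀) (a : ℕ → ℕ → ℝ) (s : ℕ) (f h : X₀) : ℝ :=
  ∑' i, (a i s) ^ 2 * (inner ℝ f (e i) : ℝ) * (inner ℝ h (e i) : ℝ)

/-- The norm `‖f‖_s = (∑ i, a_{i,s}² ⟪f,e_i⟩₀²)^(1/2)`. -/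
def normS {X₀ : Type*} [NormedAddCommGroup X₀] [InnerProductSpace ℝ X₀]
    (e : ℕ → X₀) (a : ℕ → ℕ → ℝ) (s : ℕ) (f : X₀) : ℝ :=
  Real.sqrt (∑' i, (a i s * (inner ℝ f (e i) : ℝ)) ^ 2)

/-- `M_s^c`: the set of `f ∈ X_s` with `|c i| ≤ |g i (f)| = |t i * ⟪f, e (σ i)⟫₀|`. -/
def MSetS {X₀ : Type*} [NormedAddCommGroup X₀] [InnerProductSpace ℝ X₀]
    (e : ℕ → X₀) (a : ℕ → ℕ → ℝ) (σ : ℕ → ℕ) (t : ℕ → ℝ) (s : ℕ) (c : ℕ → ℝ) :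
    Set X₀ :=
  {f | f ∈ Xs e a s ∧ ∀ i, |c i| ≤ |t i * (inner ℝ f (e (σ i)) : ℝ)|}

/-- `c^{(k)}`: the sequence `c` with its first `k` coordinates replaced by `0`. -/
def trunc (c : ℕ → ℝ) (k : ℕ) : ℕ → ℝ :=
  fun i => if i < k then 0 else c i

theorem repetition_system_A2s
    {X₀ : Type*} [NormedAddCommGroup X₀] [InnerProductSpace ℝ X₀] [CompleteSpace X₀]
    (e : HilbertBasis ℕ ℝ X₀) (a : ℕ → ℕ → ℝ)
    (ha0 : ∀ i, a i 0 = 1) (ha1 : ∀ i s, 1 ≤ a i s)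
    (hamono : ∀ i s, a i s ≤ a i (s + 1))
    (σ : ℕ → ℕ) (t : ℕ → ℝ)
    (hσmono : Monotone σ) (hσsurj : Function.Surjective σ)
    (hσtend : Filter.Tendsto σ Filter.atTop Filter.atTop)
    (ht : ∀ i, t i ≠ 0) :
    ∀ s : ℕ, ∀ c : ℕ → ℝ, (MSetS (⇑e) a σ t s c).Nonempty →
      ∀ ε > (0 : ℝ), ∃ k : ℕ, ∃ f ∈ MSetS (⇑e) a σ t s (trunc c k),
        normS (⇑e) a s f < ε := by
  intro s c ⟨f₀, hf₀X, hf₀c⟩ ε hε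
  set g : ℕ → ℝ := fun i => (a i s * (inner ℝ f₀ (e i) : ℝ)) ^ 2 with hg
  have hgsum : Summable g := hf₀X
  have htail : Filter.Tendsto (fun n => ∑' i, g (i + n)) Filter.atTop (nhds 0) :=
    tendsto_sum_nat_add g
  have hcomp : Filter.Tendsto (fun k => ∑' i, g (i + σ k)) Filter.atTop (nhds 0) :=
    htail.comp hσtend
  have hev : ∀ᶠ k in Filter.atTop, ∑' i, g (i + σ k) < ε ^ 2 :=
    hcomp.eventually_lt_const (by positivity)
  obtain ⟨k, hk⟩ := hev.exists
  set f : X₀ := f₀ - ∑ m ∈ Finset.range (σ k), ((inner ℝ f₀ (e m) : ℝ)) • e m with hf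
  have horth := orthonormal_iff_ite.mp e.orthonormal
  have hin : ∀ j, (inner ℝ f (e j) : ℝ) =
      if j < σ k then 0 else (inner ℝ f₀ (e j) : ℝ) := by
    intro j
    rw [hf, inner_sub_left, sum_inner]
    have h4 : ∑ m ∈ Finset.range (σ k), (inner ℝ (((inner ℝ f₀ (e m) : ℝ)) • e m) (e j) : ℝ)
        = ∑ m ∈ Finset.range (σ k),
          (inner ℝ f₀ (e m) : ℝ) * (if m = j then (1:ℝ) else 0) := by
      refine Finset.sum_congr rfl fun m _ => ?_
      rw [real_inner_smul_left, horth m j]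
    rw [h4]
    by_cases hj : j < σ k
    · rw [Finset.sum_eq_single j (fun m _ hm => by simp [hm]) (fun h => absurd
        (Finset.mem_range.mpr hj) h)]
      simp [hj]
    · rw [Finset.sum_eq_zero fun m hm => ?_]
      · simp [hj]
      · have hmj : m ≠ j := fun h => hj (h ▸ Finset.mem_range.mp hm)
        simp [hmj]
  have hterm : (fun i => (a i s * (inner ℝ f (e i) : ℝ)) ^ 2)
      = fun i => if i < σ k then 0 else g i := by
    funext i
    rw [hin i]
    by_cases hi : i < σ k <;> simp [hi, hg]
  have hsum : Summable fun i => if i < σ k then 0 else g i := by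
    refine Summable.of_nonneg_of_le (fun i => ?_) (fun i => ?_) hgsum
    · by_cases hi : i < σ k <;> simp [hi, hg] <;> positivity
    · by_cases hi : i < σ k <;> simp [hi, hg] <;> positivity
  refine ⟨k, f, ⟨?_, ?_⟩, ?_⟩
  · show Summable _
    rw [hterm]; exact hsum
  · intro i
    by_cases hi : i < k
    · simp [trunc, hi]; positivity
    · have hσi : ¬ σ i < σ k := not_lt.mpr (hσmono (not_lt.mp hi))
      rw [hin (σ i)]
      simp only [hσi, if_false]
      simpa [trunc, hi] using hf₀c i
  · have heq : (∑' i, if i < σ k then 0 else g i) = ∑' i, g (i + σ k) := by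
      have h1 := Summable.sum_add_tsum_nat_add (f := fun i => if i < σ k then (0:ℝ) else g i)
        (σ k) hsum
      have h2 : ∑ i ∈ Finset.range (σ k), (if i < σ k then (0:ℝ) else g i) = 0 :=
        Finset.sum_eq_zero fun i hi => by simp [Finset.mem_range.mp hi]
      have h3 : (fun i => if i + σ k < σ k then (0:ℝ) else g (i + σ k))
          = fun i => g (i + σ k) := by
        funext i; simp
      rw [h2, zero_add, h3] at h1
      exact h1.symm
    unfold normS
    rw [hterm, heq]
    rw [show ε = Real.sqrt (ε ^ 2) by rw [Real.sqrt_sq hε.le]]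
    exact Real.sqrt_lt_sqrt (tsum_nonneg fun i => by positivity) hk
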